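/- Let k ≥ 2 and 2 ≤ ℓ ≤ k. If there exists a non-empty h-ary hereditarily ℓ-rigid relation ρ on **k**, then k^{\underline{ℓ}} ≤ binom(s(h,ℓ), ⌊s(h,ℓ)/2⌋), where k^{\underline{ℓ}} = k(k−1)⋯(k−ℓ+1) is the falling factorial and s(h,ℓ) is the number of surjections from an h-element set onto an ℓ-element set. -/

import Mathlib

/-- A unary partial function on `Fin k`: a domain together with a value map
(values outside the domain are irrelevant). -/
structure PFun1 (k : ℕ) where
  Dom : Set (Fin k)
  toFun : Fin k → Fin k

/-- A unary partial function `f` preserves the `h`-ary relation `ρ` if whenever a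
tuple of `ρ` has all its entries in the domain of `f`, the image tuple is in `ρ`. -/
def Preserves1 {k h : ℕ} (f : PFun1 k) (ρ : Set (Fin h → Fin k)) : Prop :=
  ∀ M : Fin h → Fin k, M ∈ ρ → (∀ i, M i ∈ f.Dom) → (fun i => f.toFun (M i)) ∈ ρ

/-- `pPol^{(1)}(ρ)`: the set of unary partial functions preserving `ρ`. -/
def pPol1 {k : ℕ} (h : ℕ) (ρ : Set (Fin h → Fin k)) : Set (PFun1 k) :=
  { f | Preserves1 f ρ }

/-- `Ω_{<ℓ}(k)`: unary partial functions that are restrictions of the identity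
or whose image has fewer than `ℓ` elements. -/
def Omega (k ℓ : ℕ) : Set (PFun1 k) :=
  { f | (∀ x ∈ f.Dom, f.toFun x = x) ∨ (f.toFun '' f.Dom).ncard < ℓ }

/-- `Ψ_ℓ(k)`: unary partial functions with domain of size `ℓ` not in `Ω_{<ℓ}(k)`. -/
def Psi (k ℓ : ℕ) : Set (PFun1 k) :=
  { f | f.Dom.ncard = ℓ ∧ f ∉ Omega k ℓ }

/-- `g` is a subfunction of `f`. -/
def Sub1 {k : ℕ} (g f : PFun1 k) : Prop :=
  g.Dom ⊆ f.Dom ∧ ∀ x ∈ g.Dom, g.toFun x = f.toFun x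

/-- `ρ` is hereditarily `ℓ`-rigid: `pPol^{(1)}(ρ) = Ω_{<ℓ}(k)`. -/
def HereditarilyRigid {k : ℕ} (h : ℕ) (ℓ : ℕ) (ρ : Set (Fin h → Fin k)) : Prop :=
  pPol1 h ρ = Omega k ℓ

/-- `T_ρ^ℓ(x)`: the set of surjective `i : [h] → [ℓ]` with `x ∘ i ∈ ρ`. -/
def Tset {k h : ℕ} (ℓ : ℕ) (ρ : Set (Fin h → Fin k)) (x : Fin ℓ → Fin k) :
    Set (Fin h → Fin ℓ) :=
  { i | Function.Surjective i ∧ x ∘ i ∈ ρ }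

/-- `s(h, ℓ)`: the number of surjections from an `h`-element set onto an `ℓ`-element set. -/
noncomputable def numSurj (h ℓ : ℕ) : ℕ := Nat.card { i : Fin h → Fin ℓ // Function.Surjective i }
lemma key_not_subset {k h : ℕ} (ℓ : ℕ) (hℓ2 : 2 ≤ ℓ) (ρ : Set (Fin h → Fin k))
    (hrig : HereditarilyRigid h ℓ ρ) (x y : Fin ℓ ↪ Fin k) (hxy : x ≠ y) :
    ¬ (Tset ℓ ρ x ⊆ Tset ℓ ρ y) := by
  classical
  have hne : Nonempty (Fin ℓ) := ⟨⟨0, by omega⟩⟩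
  set inv := Function.invFun (⇑x) with hinvdef
  have hleft : ∀ j, inv (x j) = j := fun j => Function.leftInverse_invFun x.injective j
  set f : PFun1 k := ⟨Set.range ⇑x, fun a => y (inv a)⟩ with hf
  have hfnot : f ∉ Omega k ℓ := by
    rintro (h1 | h2)
    · apply hxy
      apply DFunLike.ext
      intro j
      have := h1 (x j) ⟨j, rfl⟩
      simp only [hf, hleft j] at this
      exact this.symm
    · have himg : f.toFun '' f.Dom = Set.range ⇑y := by
        show (fun a => y (inv a)) '' Set.range ⇑x = _
        have hcomp : (fun a => y (inv a)) ∘ ⇑x = ⇑y := funext fun j => by simp [hleft j]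
        rw [← Set.range_comp, hcomp]
      rw [himg, ← Set.image_univ, Set.ncard_image_of_injective _ y.injective,
        Set.ncard_univ, Nat.card_eq_fintype_card, Fintype.card_fin] at h2
      omega
  have hfnotpol : f ∉ pPol1 h ρ := by rw [hrig]; exact hfnot
  simp only [pPol1, Set.mem_setOf_eq, Preserves1, not_forall] at hfnotpol
  obtain ⟨M, hMρ, hMdom, hnot⟩ := hfnotpol
  set i : Fin h → Fin ℓ := fun j => inv (M j) with hidef
  have hMx : ∀ j, x (i j) = M j := by
    intro j
    exact Function.invFun_eq (hMdom j)
  have hfM : (fun j => f.toFun (M j)) = ⇑y ∘ i := rfl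
  have hisurj : Function.Surjective i := by
    by_contra hns
    set g : PFun1 k := ⟨Set.range M, f.toFun⟩ with hg
    have hgOmega : g ∈ Omega k ℓ := by
      right
      have himg : g.toFun '' g.Dom = ⇑y '' Set.range i := by
        show f.toFun '' Set.range M = _
        rw [← Set.range_comp, ← Set.range_comp]
        congr 1
      rw [himg, Set.ncard_image_of_injective _ y.injective]
      have hss : Set.range i ⊂ Set.univ := by
        rw [Set.ssubset_univ_iff]
        exact fun e => hns (Set.range_eq_univ.mp e)
      have := Set.ncard_lt_ncard hss (Set.finite_univ)
      rwa [Set.ncard_univ, Nat.card_eq_fintype_card, Fintype.card_fin] at this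
    have hgpol : g ∈ pPol1 h ρ := by rw [hrig]; exact hgOmega
    exact hnot (hgpol M hMρ (fun j => ⟨j, rfl⟩))
  intro hsub
  have hxmem : i ∈ Tset ℓ ρ ⇑x := ⟨hisurj, by
    have : ⇑x ∘ i = M := funext hMx
    rw [this]; exact hMρ⟩
  have hymem := hsub hxmem
  exact hnot (by rw [hfM]; exact hymem.2)

theorem descFactorial_le_central_binom_of_hereditarilyRigid (k h ℓ : ℕ) (hk : 2 ≤ k)
    (hℓ2 : 2 ≤ ℓ) (hℓk : ℓ ≤ k) (ρ : Set (Fin h → Fin k)) (hρ : ρ.Nonempty)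
    (hrig : HereditarilyRigid h ℓ ρ) :
    Nat.descFactorial k ℓ ≤ Nat.choose (numSurj h ℓ) (numSurj h ℓ / 2) := by
  classical
  set α := { i : Fin h → Fin ℓ // Function.Surjective i } with hα
  have : Fintype α := Fintype.ofFinite α
  have hcardα : Fintype.card α = numSurj h ℓ := (Nat.card_eq_fintype_card).symm
  -- map each embedding to the finset of surjections in its Tset
  set F : (Fin ℓ ↪ Fin k) → Finset α :=
    fun x => {i : α | (⇑x) ∘ (i : Fin h → Fin ℓ) ∈ ρ}.toFinset with hF
  have hTF : ∀ x y : Fin ℓ ↪ Fin k, F x ⊆ F y → Tset ℓ ρ ⇑x ⊆ Tset ℓ ρ ⇑y := by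
    intro x y hsub i hi
    have : (⟨i, hi.1⟩ : α) ∈ F x := by simp [hF, Set.mem_toFinset]; exact hi.2
    have := hsub this
    simp [hF, Set.mem_toFinset] at this
    exact ⟨hi.1, this⟩
  have hFinj : Function.Injective F := by
    intro x y hxy
    by_contra hne
    exact key_not_subset ℓ hℓ2 ρ hrig x y hne (hTF x y (le_of_eq hxy))
  set 𝒜 : Finset (Finset α) := Finset.univ.image F with h𝒜
  have hanti : IsAntichain (· ⊆ ·) (𝒜 : Set (Finset α)) := by
    rintro s hs t ht hst hsub
    simp only [h𝒜, Finset.coe_image, Set.mem_image, Finset.mem_coe] at hs ht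
    obtain ⟨a, -, rfl⟩ := hs
    obtain ⟨b, -, rfl⟩ := ht
    have hab : a ≠ b := fun e => hst (by rw [e])
    exact key_not_subset ℓ hℓ2 ρ hrig a b hab (hTF a b hsub)
  have hsp := IsAntichain.sperner hanti
  rw [hcardα] at hsp
  have hcard : 𝒜.card = Nat.descFactorial k ℓ := by
    rw [h𝒜, Finset.card_image_of_injective _ hFinj, Finset.card_univ,
      Fintype.card_embedding_eq, Fintype.card_fin, Fintype.card_fin]
  rw [← hcard]
  exact hsp
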